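/- Let q be a prime power, φ ∈ 𝔽_q[t] an irreducible polynomial of degree n ≥ 1, and R = 𝔽_q[t]/(φ). Identify R with 𝔽_q^n via the basis 1, t, …, t^{n−1}, and thereby identify M_3(R) with 𝔽_q^{9n} coordinatewise; let ι : M_3(R) → 𝔽_q^{9n} denote this identification. Let d be a natural number with d < q. Then the 𝔽_q-vector space of functions SL_3(R) → 𝔽_q of the form g ↦ P(ι(g)), where P ranges over polynomials over 𝔽_q in 9n variables of total degree at most d, has dimension at least C(3n + d, d) (the dimension of the Reed–Muller code in 3n variables of degree d). -/

import Mathlib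

open Matrix MvPolynomial

/-- The coefficient embedding `ι : M₃(R) → 𝔽_q^{9n}` for `R = 𝔽_q[t]/(φ)`: a matrix is
sent to the coordinates of all nine of its entries with respect to the power basis
`1, t, …, t^{n−1}` of `R` over `𝔽_q`. -/
noncomputable def coeffEmbed {F : Type*} [Field F] (φ : Polynomial F) (hφ : φ ≠ 0)
    (g : Matrix (Fin 3) (Fin 3) (AdjoinRoot φ)) :
    Fin 3 × Fin 3 × Fin φ.natDegree → F :=
  fun x => (AdjoinRoot.powerBasisAux hφ).repr (g x.1 x.2.1) x.2.2

/-- The space of functions `SL₃(R) → 𝔽_q` of the form `g ↦ P(ι(g))` with `P` a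
polynomial in `9n` variables of total degree at most `d`. -/
noncomputable def rmSpace {F : Type*} [Field F] (φ : Polynomial F) (hφ : φ ≠ 0) (d : ℕ) :
    Submodule F (Matrix.SpecialLinearGroup (Fin 3) (AdjoinRoot φ) → F) where
  carrier := {f | ∃ P : MvPolynomial (Fin 3 × Fin 3 × Fin φ.natDegree) F,
    P.totalDegree ≤ d ∧
    ∀ g : Matrix.SpecialLinearGroup (Fin 3) (AdjoinRoot φ),
      f g = MvPolynomial.eval (coeffEmbed φ hφ g.val) P}
  add_mem' := by
    rintro f f' ⟨P, hP, hPe⟩ ⟨Q, hQ, hQe⟩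
    exact ⟨P + Q, le_trans (MvPolynomial.totalDegree_add P Q) (max_le hP hQ),
      fun g => by simp [hPe g, hQe g]⟩
  zero_mem' := ⟨0, by simp, fun g => by simp⟩
  smul_mem' := by
    rintro c f ⟨P, hP, hPe⟩
    exact ⟨c • P, le_trans (MvPolynomial.totalDegree_smul_le c P) hP,
      fun g => by simp [hPe g]⟩

section StarsBars

/-- Slack-variable equivalence for stars and bars. -/
noncomputable def optionSlackEquiv (σ : Type*) (d : ℕ) :
    {P : Option σ →₀ ℕ // P.sum (fun _ ↦ id) = d} ≃
      {s : σ →₀ ℕ // (s.sum fun _ e => e) ≤ d} where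
  toFun P := ⟨P.1.some, by
    have h := Finsupp.sum_option_index (M := ℕ) (N := ℕ) P.1 (fun _ x => x)
      (fun _ => rfl) (fun _ _ _ => rfl)
    have h2 : P.1.sum (fun _ x => x) = d := P.2
    have h3 : ((P : Option σ →₀ ℕ).some.sum fun a => (fun _ x => x) (some a)) =
        ((P : Option σ →₀ ℕ).some.sum fun _ e => e) := rfl
    omega⟩
  invFun s := ⟨Finsupp.mapDomain Option.some s.1 +
      Finsupp.single none (d - s.1.sum fun _ e => e), by
    rw [Finsupp.sum_add_index' (fun _ => rfl) (fun _ _ _ => rfl),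
      Finsupp.sum_mapDomain_index (fun _ => rfl) (fun _ _ _ => rfl),
      Finsupp.sum_single_index rfl]
    exact Nat.add_sub_cancel' s.2⟩
  left_inv P := by
    have h := Finsupp.sum_option_index (M := ℕ) (N := ℕ) P.1 (fun _ x => x)
      (fun _ => rfl) (fun _ _ _ => rfl)
    have h2 : P.1.sum (fun _ x => x) = d := P.2
    ext x
    match x with
    | none =>
      have h4 : Finsupp.mapDomain Option.some (P : Option σ →₀ ℕ).some none = 0 :=
        Finsupp.mapDomain_notin_range _ _ (by simp)
      have h3 : ((P : Option σ →₀ ℕ).some.sum fun a => (fun _ x => x) (some a)) =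
          ((P : Option σ →₀ ℕ).some.sum fun _ e => e) := rfl
      have h5 : (P : Option σ →₀ ℕ) none + ((P : Option σ →₀ ℕ).some.sum fun _ e => e) = d :=
        h.symm.trans h2
      simp only [Finsupp.coe_add, Pi.add_apply, h4, Finsupp.single_eq_same, zero_add]
      omega
    | some a =>
      simp [Finsupp.mapDomain_apply (Option.some_injective σ)]
  right_inv s := by
    ext a
    simp [Finsupp.mapDomain_apply (Option.some_injective σ)]

lemma card_sum_le (σ : Type*) [Fintype σ] [DecidableEq σ] (d : ℕ) :
    Nat.card {s : σ →₀ ℕ // (s.sum fun _ e => e) ≤ d} =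
      (Fintype.card σ + d).choose d := by
  rw [← Nat.card_congr (optionSlackEquiv σ d),
    ← Nat.card_congr (Sym.equivNatSum (Option σ) d),
    Nat.card_eq_fintype_card, Sym.card_sym_eq_choose, Fintype.card_option]
  congr 1
  omega

end StarsBars

section Unipotent

variable {F : Type*} [Field F] (φ : Polynomial F) (hφ : φ ≠ 0)

/-- The index embedding: the three free coordinates `(0,1), (0,2), (1,2)`. -/
def uniIdx : Fin 3 × Fin φ.natDegree → Fin 3 × Fin 3 × Fin φ.natDegree :=
  fun x => ((![((0 : Fin 3), (1 : Fin 3)), (0, 2), (1, 2)] x.1).1,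
    (![((0 : Fin 3), (1 : Fin 3)), (0, 2), (1, 2)] x.1).2, x.2)

/-- Unipotent upper-triangular matrix with prescribed coefficients. -/
noncomputable def uniMat (c : Fin 3 × Fin φ.natDegree → F) :
    Matrix (Fin 3) (Fin 3) (AdjoinRoot φ) :=
  !![1, (AdjoinRoot.powerBasisAux hφ).equivFun.symm (fun k => c (0, k)),
      (AdjoinRoot.powerBasisAux hφ).equivFun.symm (fun k => c (1, k));
    0, 1, (AdjoinRoot.powerBasisAux hφ).equivFun.symm (fun k => c (2, k));
    0, 0, 1]

lemma uniMat_det (c : Fin 3 × Fin φ.natDegree → F) : (uniMat φ hφ c).det = 1 := by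
  simp [uniMat, Matrix.det_fin_three, Matrix.vecHead, Matrix.vecTail]

lemma coeffEmbedAux {ι M : Type*} [Fintype ι] [AddCommGroup M] [Module F M]
    (b : Module.Basis ι F M) (v : ι → F) (k : ι) : b.repr (b.equivFun.symm v) k = v k := by
  rw [← Module.Basis.equivFun_apply, LinearEquiv.apply_symm_apply]

lemma coeffEmbed_uniMat (c : Fin 3 × Fin φ.natDegree → F) (x : Fin 3 × Fin φ.natDegree) :
    coeffEmbed φ hφ (uniMat φ hφ c) (uniIdx φ x) = c x := by
  obtain ⟨i, k⟩ := x
  fin_cases i <;>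
    simp [coeffEmbed, uniIdx, uniMat, coeffEmbedAux, Finsupp.single_apply]

end Unipotent

lemma eval_zero_of_restrictDegree {σ : Type} [Finite σ] {K : Type*} [Field K] [Fintype K]
    (p : MvPolynomial σ K) (h : ∀ v : σ → K, eval v p = 0)
    (hp : p ∈ restrictDegree σ K (Fintype.card K - 1)) : p = 0 := by
  classical
  let f : σ → ULift σ := fun x => ULift.up x
  have hinj : Function.Injective f := fun a b hab => congrArg ULift.down hab
  have hmem : rename f p ∈ restrictDegree (ULift σ) K (Fintype.card K - 1) := by
    rw [mem_restrictDegree]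
    intro s hs i
    rw [support_rename_of_injective hinj, Finset.mem_image] at hs
    obtain ⟨s₀, hs₀, rfl⟩ := hs
    obtain ⟨y⟩ := i
    rw [show ULift.up y = f y from rfl, Finsupp.mapDomain_apply hinj]
    exact (mem_restrictDegree σ p _).mp hp s₀ hs₀ y
  have hq : rename f p = 0 := by
    refine eq_zero_of_eval_eq_zero _ K (rename f p) (fun v => ?_) hmem
    rw [eval_rename]; exact h _
  exact rename_injective f hinj (by simpa using hq)


/-- **Rate of the global code.** For `φ` irreducible of degree `n ≥ 1` over `𝔽_q` and
`d < q`, the space of functions `SL₃(𝔽_q[t]/(φ)) → 𝔽_q` obtained by restricting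
`9n`-variate polynomials of total degree at most `d` along the coefficient embedding has
`𝔽_q`-dimension at least `C(3n + d, d)`, the dimension of the Reed–Muller code in `3n`
variables of degree `d`. -/
theorem rmSpace_finrank_ge {F : Type*} [Field F] [Fintype F] (φ : Polynomial F)
    (hirr : Irreducible φ) (hn : 1 ≤ φ.natDegree) (d : ℕ) (hd : d < Fintype.card F) :
    (3 * φ.natDegree + d).choose d ≤
      Module.finrank F (rmSpace φ hirr.ne_zero d) := by
  classical
  have hφ : φ ≠ 0 := hirr.ne_zero
  set n := φ.natDegree with hndef
  set σι := (Fin 3 × Fin n)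
  set τι := (Fin 3 × Fin 3 × Fin n)
  -- finiteness
  haveI : Module.Finite F (AdjoinRoot φ) :=
    Module.Finite.of_basis (AdjoinRoot.powerBasisAux hφ)
  haveI : Finite (AdjoinRoot φ) := Module.finite_of_finite F
  haveI : Finite (Matrix.SpecialLinearGroup (Fin 3) (AdjoinRoot φ)) :=
    inferInstanceAs (Finite {A : Matrix (Fin 3) (Fin 3) (AdjoinRoot φ) // A.det = 1})
  haveI : Module.Finite F (Matrix.SpecialLinearGroup (Fin 3) (AdjoinRoot φ) → F) :=
    inferInstance
  -- the linear map
  let L0 : MvPolynomial σι F →ₗ[F] (Matrix.SpecialLinearGroup (Fin 3) (AdjoinRoot φ) → F) :=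
    (LinearMap.funLeft F F (fun g => coeffEmbed φ hφ g.val)).comp
      ((evalₗ F τι).comp (rename (uniIdx φ)).toLinearMap)
  let L1 := L0.comp (restrictTotalDegree σι F d).subtype
  have hmem : ∀ P : restrictTotalDegree σι F d, L1 P ∈ rmSpace φ hφ d := by
    intro P
    exact ⟨rename (uniIdx φ) P.1,
      le_trans (totalDegree_rename_le _ _) ((mem_restrictTotalDegree _ _ _).mp P.2),
      fun g => rfl⟩
  let L := L1.codRestrict (rmSpace φ hφ d) hmem
  have hker : LinearMap.ker L = ⊥ := by
    rw [LinearMap.ker_eq_bot']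
    intro P hP
    have hval : ∀ g : Matrix.SpecialLinearGroup (Fin 3) (AdjoinRoot φ),
        eval (coeffEmbed φ hφ g.val) (rename (uniIdx φ) P.1) = 0 := by
      intro g
      have := congrFun (congrArg Subtype.val hP) g
      exact this
    have hzero : ∀ c : σι → F, eval c P.1 = 0 := by
      intro c
      set g : Matrix.SpecialLinearGroup (Fin 3) (AdjoinRoot φ) :=
        ⟨uniMat φ hφ c, uniMat_det φ hφ c⟩ with hgdef
      have hg := hval g
      rw [eval_rename] at hg
      have hc : coeffEmbed φ hφ g.val ∘ uniIdx φ = c :=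
        funext fun x => coeffEmbed_uniMat φ hφ c x
      rwa [hc] at hg
    have hdeg : P.1 ∈ restrictDegree σι F (Fintype.card F - 1) := by
      refine restrictSupport_mono (R := F) ?_ (restrictTotalDegree_le_restrictDegree σι F d P.2)
      intro s hs i
      exact le_trans (hs i) (Nat.le_sub_one_of_lt hd)
    have : P.1 = 0 := eval_zero_of_restrictDegree P.1 hzero hdeg
    exact Subtype.ext this
  have hinj : Function.Injective L := LinearMap.ker_eq_bot.mp hker
  -- dimension count
  haveI : Finite ↥{s : σι →₀ ℕ | (s.sum fun _ e => e) ≤ d} :=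
    Finite.of_equiv _ ((Sym.equivNatSum (Option σι) d).trans (optionSlackEquiv σι d))
  haveI fS : Fintype ↥{s : σι →₀ ℕ | (s.sum fun _ e => e) ≤ d} :=
    Fintype.ofFinite _
  have hfr : Module.finrank F (restrictTotalDegree σι F d) = (3 * n + d).choose d := by
    rw [show restrictTotalDegree σι F d =
        restrictSupport F {s : σι →₀ ℕ | (s.sum fun _ e => e) ≤ d} from rfl,
      Module.finrank_eq_card_basis
      (basisRestrictSupport F {s : σι →₀ ℕ | (s.sum fun _ e => e) ≤ d})]
    rw [← Nat.card_eq_fintype_card]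
    have hc := card_sum_le σι d
    have hcard : Fintype.card σι = 3 * n := by
      show Fintype.card (Fin 3 × Fin n) = 3 * n
      simp
    rw [hcard] at hc
    exact hc
  calc (3 * n + d).choose d = Module.finrank F (restrictTotalDegree σι F d) := hfr.symm
    _ ≤ Module.finrank F (rmSpace φ hφ d) :=
      LinearMap.finrank_le_finrank_of_injective hinj
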